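/- Let (p_j)_{j≥1} be a probability mass function on ℕ₊ and i ≥ 1. Let ν̄(x) = #{j : p_j ≥ x} be the counting function and ν₁(0, x) = Σ_j p_j 1_{p_j < x} (probabilities strictly below x may be replaced by ≤ x, either convention works with the bound as stated for p_j ≤ 1/i). Then ((e−1)/e)·ν̄(1/i) ≤ E K_i ≤ ν̄(1/i) + i·ν₁(0, 1/i), where E K_i = Σ_j (1 − (1−p_j)^i). -/
import Mathlib


/-- Lower and upper bounds on the expected number of distinct symbols
`E K_i = Σ_j (1 - (1 - p_j)^i)` in terms of the counting function
`ν̄(x) = #{j : p_j ≥ x}` and the small-probability mass `ν₁(0,1/i] = Σ_{p_j ≤ 1/i} p_j`. -/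
theorem stmt_4 (p : ℕ → ℝ) (hp : ∀ j, 0 ≤ p j) (hsum : HasSum p 1) (i : ℕ) (hi : 1 ≤ i) :
    ((Real.exp 1 - 1) / Real.exp 1) * (Nat.card {j : ℕ | 1 / (i : ℝ) ≤ p j} : ℝ)
      ≤ (∑' j, (1 - (1 - p j) ^ i)) ∧
    (∑' j, (1 - (1 - p j) ^ i))
      ≤ (Nat.card {j : ℕ | 1 / (i : ℝ) ≤ p j} : ℝ)
        + i * (∑' j, if p j ≤ 1 / (i : ℝ) then p j else 0) := by
  have hipos : (0:ℝ) < 1 / i := by positivity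
  have hile : 1 / (i:ℝ) ≤ 1 := by
    rw [div_le_one (by positivity)]
    exact_mod_cast hi
  have hp1 : ∀ j, p j ≤ 1 := fun j => le_hasSum hsum j fun k _ => hp k
  set S := {j : ℕ | 1 / (i : ℝ) ≤ p j} with hSdef
  have hSfin : S.Finite := by
    have h1 : ∀ᶠ j in Filter.cofinite, p j < 1 / i :=
      (hsum.summable.tendsto_cofinite_zero).eventually_lt_const hipos
    have h2 := Filter.eventually_cofinite.mp h1
    exact h2.subset fun j hj => not_lt.mpr hj
  have hf0 : ∀ j, 0 ≤ 1 - (1 - p j) ^ i := by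
    intro j
    have h1 : (1 - p j) ^ i ≤ 1 :=
      pow_le_one₀ (by linarith [hp1 j]) (by linarith [hp j])
    linarith
  have hfle : ∀ j, 1 - (1 - p j) ^ i ≤ i * p j := by
    intro j
    have h := one_add_mul_le_pow (a := -p j) (by linarith [hp1 j]) i
    have h' : 1 - (i:ℝ) * p j ≤ (1 - p j) ^ i := by
      simpa [sub_eq_add_neg] using h
    linarith
  have hsummf : Summable fun j => 1 - (1 - p j) ^ i :=
    Summable.of_nonneg_of_le hf0 hfle (hsum.summable.mul_left (i:ℝ))
  have hklow : ∀ j ∈ S, (Real.exp 1 - 1) / Real.exp 1 ≤ 1 - (1 - p j) ^ i := by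
    intro j hj
    have hj' : 1 / (i:ℝ) ≤ p j := hj
    have h1 : (1 - p j) ^ i ≤ (1 - 1 / (i:ℝ)) ^ i :=
      pow_le_pow_left₀ (by linarith [hp1 j]) (by linarith) i
    have h2 : (1 - 1 / (i:ℝ)) ^ i ≤ Real.exp (-1) := by
      calc (1 - 1 / (i:ℝ)) ^ i ≤ (Real.exp (-(1 / i))) ^ i := by
            apply pow_le_pow_left₀ (by linarith)
            linarith [Real.add_one_le_exp (-(1 / (i:ℝ)))]
        _ = Real.exp (-1) := by
            rw [← Real.exp_nat_mul]
            congr 1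
            field_simp
      -- done
    have h3 : (Real.exp 1 - 1) / Real.exp 1 = 1 - Real.exp (-1) := by
      rw [Real.exp_neg]
      field_simp
    linarith
  have hcard : (Nat.card S : ℝ) = (hSfin.toFinset.card : ℝ) := by
    rw [Nat.card_coe_set_eq, Set.ncard_eq_toFinset_card _ hSfin]
  constructor
  · rw [hcard]
    calc ((Real.exp 1 - 1) / Real.exp 1) * (hSfin.toFinset.card : ℝ)
        = ∑ _j ∈ hSfin.toFinset, (Real.exp 1 - 1) / Real.exp 1 := by
          rw [Finset.sum_const, nsmul_eq_mul, mul_comm]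
      _ ≤ ∑ j ∈ hSfin.toFinset, (1 - (1 - p j) ^ i) := by
          apply Finset.sum_le_sum
          intro j hj
          exact hklow j (hSfin.mem_toFinset.mp hj)
      _ ≤ ∑' j, (1 - (1 - p j) ^ i) := Summable.sum_le_tsum _ (fun j _ => hf0 j) hsummf
  · rw [hcard]
    set q : ℕ → ℝ := fun j => if p j ≤ 1 / (i:ℝ) then p j else 0 with hq
    have hq0 : ∀ j, 0 ≤ q j := by
      intro j; simp only [hq]; split <;> [exact hp j; exact le_rfl]
    have hqle : ∀ j, q j ≤ p j := by
      intro j; simp only [hq]; split <;> [exact le_rfl; exact hp j]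
    have hsummq : Summable q := Summable.of_nonneg_of_le hq0 hqle hsum.summable
    set ind : ℕ → ℝ := fun j => if 1 / (i:ℝ) ≤ p j then 1 else 0 with hind
    have hsummind : Summable ind := by
      apply summable_of_ne_finset_zero (s := hSfin.toFinset)
      intro j hj
      simp only [hind]
      rw [if_neg]
      intro h
      exact hj (hSfin.mem_toFinset.mpr h)
    have hptw : ∀ j, 1 - (1 - p j) ^ i ≤ ind j + i * q j := by
      intro j
      simp only [hind, hq]
      by_cases h : 1 / (i:ℝ) ≤ p j
      · rw [if_pos h]
        have h0 : (0:ℝ) ≤ (1 - p j) ^ i := pow_nonneg (by linarith [hp1 j]) i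
        have hic : (0:ℝ) ≤ (i:ℝ) := Nat.cast_nonneg i
        split_ifs <;> nlinarith [hp j]
      · rw [if_neg h, if_pos (le_of_lt (not_le.mp h))]
        have := hfle j
        linarith
    have htsum_ind : ∑' j, ind j = (hSfin.toFinset.card : ℝ) := by
      rw [tsum_eq_sum (s := hSfin.toFinset) (by
        intro j hj
        simp only [hind]
        rw [if_neg]
        intro h
        exact hj (hSfin.mem_toFinset.mpr h))]
      simp only [hind]
      have hone : ∀ j ∈ hSfin.toFinset, (if 1 / (i:ℝ) ≤ p j then (1:ℝ) else 0) = 1 :=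
        fun j hj => if_pos (hSfin.mem_toFinset.mp hj)
      rw [Finset.sum_congr rfl hone]
      simp
    calc ∑' j, (1 - (1 - p j) ^ i)
        ≤ ∑' j, (ind j + i * q j) :=
          Summable.tsum_le_tsum hptw hsummf (hsummind.add (hsummq.mul_left (i:ℝ)))
      _ = (∑' j, ind j) + ∑' j, (i:ℝ) * q j :=
          Summable.tsum_add hsummind (hsummq.mul_left (i:ℝ))
      _ = (hSfin.toFinset.card : ℝ) + i * ∑' j, q j := by
          rw [htsum_ind, tsum_mul_left]
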